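/- Let A be a commutative ring of characteristic p > 0 with a Frobenius splitting σ, and let I be an ideal with σ(I) ⊆ I. Then every minimal prime ideal over I is compatibly split, i.e. if P is a prime ideal minimal among primes containing I, then σ(P) ⊆ P. -/

import Mathlib

def IsFrobeniusSplitting {A : Type*} [CommRing A] (p : ℕ) (σ : A → A) : Prop :=
  (∀ a b : A, σ (a + b) = σ a + σ b) ∧ (∀ a b : A, σ (a ^ p * b) = a * σ b) ∧ σ 1 = 1

/-- If `P` is a minimal prime over `I` and `a ∈ P`, then some multiple `s * a ^ n`
with `s ∉ P` lies in `I`. -/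
lemma aux_exists {A : Type*} [CommRing A] (I : Ideal A) (P : Ideal A)
    (hP : P ∈ I.minimalPrimes) {a : A} (ha : a ∈ P) :
    ∃ s ∉ P, ∃ n : ℕ, s * a ^ n ∈ I := by
  rw [Ideal.minimalPrimes_eq_comap] at hP
  obtain ⟨Q, hQ, rfl⟩ := hP
  haveI hQp : Q.IsPrime := hQ.1.1
  set R := A ⧸ I
  set L := Localization Q.primeCompl
  have hmem : algebraMap R L (Ideal.Quotient.mk I a) ∈ IsLocalRing.maximalIdeal L := by
    rw [IsLocalization.AtPrime.to_map_mem_maximal_iff L Q]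
    exact ha
  have hnil : IsNilpotent (algebraMap R L (Ideal.Quotient.mk I a)) :=
    haveI := Ring.KrullDimLE.of_isLocalization Q hQ L
    Ring.KrullDimLE.isNilpotent_iff_mem_maximalIdeal.mpr hmem
  obtain ⟨n, hn⟩ := hnil
  rw [← map_pow, IsLocalization.map_eq_zero_iff Q.primeCompl] at hn
  obtain ⟨⟨s, hs⟩, hsn⟩ := hn
  obtain ⟨t, rfl⟩ := Ideal.Quotient.mk_surjective s
  refine ⟨t, hs, n, ?_⟩
  have : Ideal.Quotient.mk I (t * a ^ n) = 0 := by
    rw [map_mul, map_pow]; exact hsn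
  exact (Ideal.Quotient.eq_zero_iff_mem).mp this

theorem frobenius_split_minimal_prime {A : Type*} [CommRing A] [IsNoetherianRing A]
    (p : ℕ) [Fact p.Prime] [CharP A p] (σ : A → A) (hσ : IsFrobeniusSplitting p σ)
    (I : Ideal A) (hI : ∀ a ∈ I, σ a ∈ I) :
    ∀ P ∈ I.minimalPrimes, ∀ a ∈ P, σ a ∈ P := by
  obtain ⟨hadd, hmul, hone⟩ := hσ
  intro P hP a haP
  haveI hPp : P.IsPrime := hP.1.1
  have hIP : I ≤ P := hP.1.2
  obtain ⟨s, hs, n, hsn⟩ := aux_exists I P hP haP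
  have hp1 : 1 ≤ p := (Fact.out : p.Prime).one_le
  have hsplit : s ^ p = s * s ^ (p - 1) := by
    conv_lhs => rw [← Nat.sub_add_cancel hp1]
    rw [pow_succ']
  have hle : n ≤ p ^ n := Nat.le_of_lt (Nat.lt_pow_self (n := n) (Fact.out : p.Prime).one_lt)
  have hpe : s * a ^ (p ^ n) ∈ I := by
    have : s * a ^ (p ^ n) = (s * a ^ n) * a ^ (p ^ n - n) := by
      rw [mul_assoc, ← pow_add, Nat.add_sub_cancel' hle]
    rw [this]
    exact I.mul_mem_right _ hsn
  -- descend: s * a ^ (p ^ e) ∈ I → s * a ∈ I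
  have key : ∀ e : ℕ, s * a ^ (p ^ e) ∈ I → s * a ∈ I := by
    intro e
    induction e with
    | zero => simp
    | succ e ih =>
      intro h
      apply ih
      have hpow : (s * a ^ (p ^ e)) ^ p * 1 = (s * a ^ (p ^ (e + 1))) * s ^ (p - 1) := by
        rw [mul_one, mul_pow, ← pow_mul, ← pow_succ, hsplit]
        ring
      have hmem : (s * a ^ (p ^ e)) ^ p * 1 ∈ I := by
        rw [hpow]; exact I.mul_mem_right _ h
      have := hI _ hmem
      rwa [hmul, mul_comm, hone, one_mul] at this
  have hsa : s * a ∈ I := key n hpe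
  have hsp : s ^ p * a ∈ I := by
    have : s ^ p * a = (s * a) * s ^ (p - 1) := by
      rw [hsplit]; ring
    rw [this]
    exact I.mul_mem_right _ hsa
  have : σ (s ^ p * a) ∈ I := hI _ hsp
  rw [hmul] at this
  exact (hPp.mem_or_mem (hIP this)).resolve_left hs
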